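/- Fix the shared-seed coordinated sampling setup. A function f : V → ℝ_{≥0} has a nonnegative unbiased estimator that is bounded on every data vector (i.e. sup_{u∈(0,1]} f̂(u,v) < ∞ for all v ∈ V) if and only if for every v ∈ V, limsup_{u→0⁺} (f(v) − f̲^{(v)}(u))/u < ∞. -/

import Mathlib

open MeasureTheory Set Filter Topology

noncomputable section

/-- A shared-seed coordinated sampling scheme on a data domain `V ⊆ ℝ_{≥0}^r`:
continuous non-decreasing seed-to-threshold maps `τ i : [0,1] → ℝ` whose range
infimum is at most the infimum of the `i`-th coordinate over the domain. -/
structure CoordScheme (r : ℕ) where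
  V : Set (Fin r → ℝ)
  τ : Fin r → ℝ → ℝ
  V_nonneg : ∀ v ∈ V, ∀ i, 0 ≤ v i
  τ_cont : ∀ i, ContinuousOn (τ i) (Set.Icc 0 1)
  τ_mono : ∀ i, MonotoneOn (τ i) (Set.Icc 0 1)
  τ_inf : ∀ i, sInf (τ i '' Set.Icc 0 1) ≤ sInf ((fun v => v i) '' V)

namespace CoordScheme

variable {r : ℕ}

/-- The set `S(u,v)` of sampled entries: `i` is sampled iff `v i ≥ τ i u`. -/
def sampled (C : CoordScheme r) (u : ℝ) (v : Fin r → ℝ) : Set (Fin r) :=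
  {i | C.τ i u ≤ v i}

/-- The consistent set `V*(u,v)` of data vectors consistent with the outcome `S(u,v)`. -/
def Vstar (C : CoordScheme r) (u : ℝ) (v : Fin r → ℝ) : Set (Fin r → ℝ) :=
  {z ∈ C.V | ∀ i, (C.τ i u ≤ v i → z i = v i) ∧ (v i < C.τ i u → z i < C.τ i u)}

/-- The lower bound function `f̲(u,v) = inf { f z : z ∈ V*(u,v) }`. -/
def lb (C : CoordScheme r) (f : (Fin r → ℝ) → ℝ) (u : ℝ) (v : Fin r → ℝ) : ℝ :=
  sInf (f '' C.Vstar u v)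

/-- An estimator: an integrable function of the outcome (it takes equal values on
data vectors consistent with the same outcome). -/
structure IsEstimator (C : CoordScheme r) (fhat : ℝ → (Fin r → ℝ) → ℝ) : Prop where
  integrable : ∀ v ∈ C.V, IntegrableOn (fun u => fhat u v) (Set.Ioc (0:ℝ) 1)
  consistent : ∀ u ∈ Set.Ioc (0:ℝ) 1, ∀ v ∈ C.V, ∀ z ∈ C.Vstar u v, fhat u v = fhat u z

/-- A nonnegative estimator. -/
def Nonneg (C : CoordScheme r) (fhat : ℝ → (Fin r → ℝ) → ℝ) : Prop :=
  ∀ u ∈ Set.Ioc (0:ℝ) 1, ∀ v ∈ C.V, 0 ≤ fhat u v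

/-- An unbiased estimator of `f`. -/
def Unbiased (C : CoordScheme r) (f : (Fin r → ℝ) → ℝ)
    (fhat : ℝ → (Fin r → ℝ) → ℝ) : Prop :=
  ∀ v ∈ C.V, (∫ u in Set.Ioc (0:ℝ) 1, fhat u v) = f v

end CoordScheme

/-- Lower convex hull of `g` on `(0,1]`: the pointwise largest convex function
bounded above by `g` there. -/
def lowerHull (g : ℝ → ℝ) (u : ℝ) : ℝ :=
  sSup {y : ℝ | ∃ h : ℝ → ℝ, ConvexOn ℝ (Set.Ioc (0:ℝ) 1) h ∧
      (∀ x ∈ Set.Ioc (0:ℝ) 1, h x ≤ g x) ∧ y = h u}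

namespace CoordScheme

variable {r : ℕ}

/-- The `v`-optimal estimates: the negated derivative of the lower hull of the
lower-bound function `u ↦ f̲(u,v)`. -/
def optEst (C : CoordScheme r) (f : (Fin r → ℝ) → ℝ) (v : Fin r → ℝ) (u : ℝ) : ℝ :=
  -deriv (lowerHull (fun x => C.lb f x v)) u

/-- Cumulative integral `∫_{2^{-j}}^1` of the J estimator (by its defining recursion):
`Jint (j+1) = Jint j + (value on `(2^{-j-1},2^{-j}]`) ⬝ 2^{-j-1}`. -/
def Jint (C : CoordScheme r) (f : (Fin r → ℝ) → ℝ) (v : Fin r → ℝ) : ℕ → ℝ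
  | 0 => 0
  | (j+1) => Jint C f v j +
      ((2:ℝ) ^ (j+1) * (C.lb f ((2:ℝ) ^ (-(j:ℤ))) v - Jint C f v j)) * (2:ℝ) ^ (-(j:ℤ) - 1)

/-- The (constant) value of the J estimator on the dyadic interval `(2^{-j-1}, 2^{-j}]`.
For `j = 0` this is `2 ⬝ f̲(1,v)`; for `j ≥ 1` it is
`2^{j+1} ⬝ ( f̲(2^{-j},v) − ∫_{2^{-j}}^1 f̂⁽ᴶ⁾(x,v) dx )`. -/
def Jval (C : CoordScheme r) (f : (Fin r → ℝ) → ℝ) (v : Fin r → ℝ) (j : ℕ) : ℝ :=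
  (2:ℝ) ^ (j+1) * (C.lb f ((2:ℝ) ^ (-(j:ℤ))) v - Jint C f v j)

/-- The J estimator `f̂⁽ᴶ⁾(u,v)`: on `u ∈ (2^{-j-1}, 2^{-j}]` it takes the value `Jval j`. -/
def Jest (C : CoordScheme r) (f : (Fin r → ℝ) → ℝ) (u : ℝ) (v : Fin r → ℝ) : ℝ :=
  C.Jval f v ⌊-Real.logb 2 u⌋₊

end CoordScheme


namespace CoordScheme
variable {r : ℕ} {C : CoordScheme r} {f : (Fin r → ℝ) → ℝ} {u x : ℝ} {v z : Fin r → ℝ}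

lemma mem_Vstar_self (hv : v ∈ C.V) : v ∈ C.Vstar u v :=
  ⟨hv, fun i => ⟨fun _ => rfl, fun h => h⟩⟩

lemma Vstar_subset : C.Vstar u v ⊆ C.V := fun z hz => hz.1

lemma lb_nonneg (hf : ∀ v ∈ C.V, 0 ≤ f v) : 0 ≤ C.lb f u v :=
  Real.sInf_nonneg (by rintro y ⟨z, hz, rfl⟩; exact hf z hz.1)

lemma lb_bddBelow (hf : ∀ v ∈ C.V, 0 ≤ f v) : BddBelow (f '' C.Vstar u v) :=
  ⟨0, by rintro y ⟨z, hz, rfl⟩; exact hf z hz.1⟩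

lemma lb_le (hf : ∀ v ∈ C.V, 0 ≤ f v) (hv : v ∈ C.V) : C.lb f u v ≤ f v :=
  csInf_le (lb_bddBelow hf) ⟨v, mem_Vstar_self hv, rfl⟩

lemma Vstar_mono (hu : u ∈ Set.Icc (0:ℝ) 1) (hx : x ∈ Set.Icc (0:ℝ) 1) (hux : u ≤ x) :
    C.Vstar u v ⊆ C.Vstar x v := by
  intro z hz
  refine ⟨hz.1, fun i => ⟨fun h => ?_, fun h => ?_⟩⟩
  · exact (hz.2 i).1 ((C.τ_mono i hu hx hux).trans h)
  · rcases le_or_gt (C.τ i u) (v i) with h' | h'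
    · exact ((hz.2 i).1 h') ▸ h
    · exact lt_of_lt_of_le ((hz.2 i).2 h') (C.τ_mono i hu hx hux)

lemma lb_anti (hf : ∀ v ∈ C.V, 0 ≤ f v) (hv : v ∈ C.V)
    (hu : u ∈ Set.Icc (0:ℝ) 1) (hx : x ∈ Set.Icc (0:ℝ) 1) (hux : u ≤ x) :
    C.lb f x v ≤ C.lb f u v :=
  csInf_le_csInf (lb_bddBelow hf) ⟨f v, v, mem_Vstar_self hv, rfl⟩
    (Set.image_mono (Vstar_mono hu hx hux))

lemma Vstar_eq_of_mem (hz : z ∈ C.Vstar u v) : C.Vstar u z = C.Vstar u v := by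
  ext w
  constructor
  · rintro ⟨hwV, hw⟩
    refine ⟨hwV, fun i => ⟨fun h => ?_, fun h => ?_⟩⟩
    · have hz1 := (hz.2 i).1 h
      rw [(hw i).1 (hz1 ▸ h), hz1]
    · exact (hw i).2 ((hz.2 i).2 h)
  · rintro ⟨hwV, hw⟩
    refine ⟨hwV, fun i => ⟨fun h => ?_, fun h => ?_⟩⟩
    · rcases le_or_gt (C.τ i u) (v i) with h' | h'
      · rw [(hw i).1 h', (hz.2 i).1 h']
      · exact absurd h (not_le.mpr ((hz.2 i).2 h'))
    · rcases le_or_gt (C.τ i u) (v i) with h' | h'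
      · exact absurd ((hz.2 i).1 h' ▸ h) (not_lt.mpr h')
      · exact (hw i).2 h'
  
lemma lb_consistent (hz : z ∈ C.Vstar u v) : C.lb f u z = C.lb f u v := by
  unfold lb; rw [Vstar_eq_of_mem hz]

lemma lb_consistent' (hu : u ∈ Set.Icc (0:ℝ) 1) (hx : x ∈ Set.Icc (0:ℝ) 1) (hux : u ≤ x)
    (hz : z ∈ C.Vstar u v) : C.lb f x z = C.lb f x v :=
  lb_consistent (Vstar_mono hu hx hux hz)

end CoordScheme
namespace CoordScheme
variable {r : ℕ} {C : CoordScheme r} {f : (Fin r → ℝ) → ℝ} {u x : ℝ} {v z : Fin r → ℝ}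

lemma two_pow_mul (j : ℕ) : (2:ℝ) ^ (j+1) * (2:ℝ) ^ (-(j:ℤ) - 1) = 1 := by
  have h : ((2:ℝ) ^ (j+1) : ℝ) = (2:ℝ) ^ ((j:ℤ)+1) := by
    rw [← zpow_natCast]; push_cast; ring_nf
  rw [h, ← zpow_add₀ (by norm_num : (2:ℝ) ≠ 0)]
  norm_num

lemma Jint_succ (C : CoordScheme r) (f : (Fin r → ℝ) → ℝ) (v : Fin r → ℝ) (j : ℕ) :
    C.Jint f v (j+1) = C.lb f ((2:ℝ) ^ (-(j:ℤ))) v := by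
  show C.Jint f v j + ((2:ℝ) ^ (j+1) * (C.lb f ((2:ℝ) ^ (-(j:ℤ))) v - C.Jint f v j))
      * (2:ℝ) ^ (-(j:ℤ) - 1) = _
  rw [mul_right_comm, two_pow_mul, one_mul]
  ring

lemma Jint_eq_sum (C : CoordScheme r) (f : (Fin r → ℝ) → ℝ) (v : Fin r → ℝ) (n : ℕ) :
    C.Jint f v n = ∑ j ∈ Finset.range n, C.Jval f v j * (2:ℝ) ^ (-(j:ℤ) - 1) := by
  induction n with
  | zero => simp [Jint]
  | succ n ih => rw [Finset.sum_range_succ, ← ih]; rfl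

lemma Jval_zero (C : CoordScheme r) (f : (Fin r → ℝ) → ℝ) (v : Fin r → ℝ) :
    C.Jval f v 0 = 2 * C.lb f 1 v := by
  show (2:ℝ) ^ (0+1) * (C.lb f ((2:ℝ) ^ (-(0:ℕ):ℤ)) v - C.Jint f v 0) = _
  norm_num [Jint]

lemma Jval_succ (C : CoordScheme r) (f : (Fin r → ℝ) → ℝ) (v : Fin r → ℝ) (j : ℕ) :
    C.Jval f v (j+1)
      = (2:ℝ) ^ (j+2) * (C.lb f ((2:ℝ) ^ (-(j:ℤ)-1)) v - C.lb f ((2:ℝ) ^ (-(j:ℤ))) v) := by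
  show (2:ℝ) ^ (j+1+1) * (C.lb f ((2:ℝ) ^ (-((j:ℕ)+1:ℕ):ℤ)) v - C.Jint f v (j+1)) = _
  rw [Jint_succ]
  norm_num
  congr 2
  push_cast
  ring

lemma dyadic_pos (j : ℤ) : (0:ℝ) < (2:ℝ) ^ j := by positivity

lemma dyadic_le_one (j : ℕ) : (2:ℝ) ^ (-(j:ℤ)) ≤ 1 := by
  apply zpow_le_one_of_nonpos₀ one_le_two (by simp)

lemma dyadic_mem (j : ℕ) : (2:ℝ) ^ (-(j:ℤ)) ∈ Set.Ioc (0:ℝ) 1 :=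
  ⟨dyadic_pos _, dyadic_le_one j⟩

lemma dyadic_succ_le (j : ℕ) : (2:ℝ) ^ (-(j:ℤ)-1) ≤ (2:ℝ) ^ (-(j:ℤ)) :=
  zpow_le_zpow_right₀ one_le_two (by linarith)

lemma dyadic_rpow (j : ℤ) : (2:ℝ) ^ ((j:ℝ)) = (2:ℝ) ^ j := Real.rpow_intCast 2 j

lemma logb_dyadic (j : ℤ) : Real.logb 2 ((2:ℝ) ^ j) = j := by
  rw [← dyadic_rpow, Real.logb_rpow (by norm_num) (by norm_num)]

lemma nat_floor_logb_eq {j : ℕ}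
    (hu : u ∈ Set.Ioc ((2:ℝ) ^ (-(j:ℤ)-1)) ((2:ℝ) ^ (-(j:ℤ)))) :
    ⌊-Real.logb 2 u⌋₊ = j := by
  have hu0 : (0:ℝ) < u := lt_trans (dyadic_pos _) hu.1
  have h1 : Real.logb 2 u ≤ -(j:ℤ) := by
    calc Real.logb 2 u ≤ Real.logb 2 ((2:ℝ) ^ (-(j:ℤ))) :=
          Real.logb_le_logb_of_le one_lt_two hu0 hu.2
    _ = -(j:ℤ) := by rw [logb_dyadic]; push_cast; ring
  have h2 : (-(j:ℤ)-1 : ℝ) < Real.logb 2 u := by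
    calc (-(j:ℤ)-1 : ℝ) = Real.logb 2 ((2:ℝ) ^ (-(j:ℤ)-1)) := by rw [logb_dyadic]; push_cast; ring
    _ < Real.logb 2 u := Real.logb_lt_logb one_lt_two (dyadic_pos _) hu.1
  rw [Nat.floor_eq_iff (by push_cast at h1 ⊢; linarith)]
  constructor
  · push_cast at h1 ⊢; linarith
  · push_cast at h2 ⊢; linarith

lemma mem_dyadic_piece (hu : u ∈ Set.Ioc (0:ℝ) 1) :
    u ∈ Set.Ioc ((2:ℝ) ^ (-(⌊-Real.logb 2 u⌋₊:ℤ)-1)) ((2:ℝ) ^ (-(⌊-Real.logb 2 u⌋₊:ℤ))) := by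
  set t := -Real.logb 2 u with ht
  have ht0 : 0 ≤ t := by
    have := Real.logb_nonpos one_lt_two hu.1.le hu.2
    simp [ht]; linarith
  have hfl : (⌊t⌋₊ : ℝ) ≤ t := Nat.floor_le ht0
  have hfl2 : t < ⌊t⌋₊ + 1 := Nat.lt_floor_add_one t
  constructor
  · have : ((-(⌊t⌋₊:ℤ)-1 : ℤ) : ℝ) < Real.logb 2 u := by push_cast; simp only [ht] at hfl2 ⊢; linarith
    have := (Real.lt_logb_iff_rpow_lt one_lt_two hu.1).mp this
    rwa [dyadic_rpow] at this
  · have : Real.logb 2 u ≤ ((-(⌊t⌋₊:ℤ) : ℤ) : ℝ) := by push_cast; simp only [ht] at hfl ⊢; linarith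
    have := (Real.logb_le_iff_le_rpow one_lt_two hu.1).mp this
    rwa [dyadic_rpow] at this

end CoordScheme
namespace CoordScheme
variable {r : ℕ} {C : CoordScheme r} {f : (Fin r → ℝ) → ℝ} {u x : ℝ} {v z : Fin r → ℝ}

lemma forward_bound (hf : ∀ v ∈ C.V, 0 ≤ f v) {fhat : ℝ → (Fin r → ℝ) → ℝ}
    (hest : C.IsEstimator fhat) (hnn : C.Nonneg fhat) (hub : C.Unbiased f fhat)
    (hv : v ∈ C.V) {M : ℝ} (hM : ∀ x ∈ Set.Ioc (0:ℝ) 1, fhat x v ≤ M)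
    (hu : u ∈ Set.Ioc (0:ℝ) 1) :
    (f v - C.lb f u v) / u ≤ M := by
  have hu0 : (0:ℝ) < u := hu.1
  have key : ∀ z ∈ C.Vstar u v, f v - M * u ≤ f z := by
    intro z hz
    have hzV : z ∈ C.V := hz.1
    have hsplit : Set.Ioc (0:ℝ) 1 = Set.Ioc 0 u ∪ Set.Ioc u 1 :=
      (Set.Ioc_union_Ioc_eq_Ioc hu0.le hu.2).symm
    have hiv := hest.integrable v hv
    have hiz := hest.integrable z hzV
    have hsub1 : Set.Ioc (0:ℝ) u ⊆ Set.Ioc 0 1 := Set.Ioc_subset_Ioc_right hu.2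
    have hsub2 : Set.Ioc u 1 ⊆ Set.Ioc (0:ℝ) 1 := Set.Ioc_subset_Ioc_left hu0.le
    have hiv1 := hiv.mono_set hsub1
    have hiv2 := hiv.mono_set hsub2
    have hiz1 := hiz.mono_set hsub1
    have hiz2 := hiz.mono_set hsub2
    have heq : Set.EqOn (fun x => fhat x v) (fun x => fhat x z) (Set.Ioc u 1) := by
      intro x hx
      exact hest.consistent x ⟨hu0.trans hx.1, hx.2⟩ v hv z
        (Vstar_mono ⟨hu0.le, hu.2⟩ ⟨(hu0.trans hx.1).le, hx.2⟩ hx.1.le hz)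
    have h1 : (∫ x in Set.Ioc u 1, fhat x v) = ∫ x in Set.Ioc u 1, fhat x z :=
      setIntegral_congr_fun measurableSet_Ioc heq
    have hv_eq : (∫ x in Set.Ioc (0:ℝ) 1, fhat x v)
        = (∫ x in Set.Ioc 0 u, fhat x v) + ∫ x in Set.Ioc u 1, fhat x v := by
      rw [hsplit]; exact setIntegral_union (Set.Ioc_disjoint_Ioc_of_le le_rfl) measurableSet_Ioc hiv1 hiv2
    have hz_eq : (∫ x in Set.Ioc (0:ℝ) 1, fhat x z)
        = (∫ x in Set.Ioc 0 u, fhat x z) + ∫ x in Set.Ioc u 1, fhat x z := by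
      rw [hsplit]; exact setIntegral_union (Set.Ioc_disjoint_Ioc_of_le le_rfl) measurableSet_Ioc hiz1 hiz2
    have hz_nonneg : 0 ≤ ∫ x in Set.Ioc (0:ℝ) u, fhat x z :=
      setIntegral_nonneg measurableSet_Ioc fun x hx => hnn x (hsub1 hx) z hzV
    have hv_le : (∫ x in Set.Ioc (0:ℝ) u, fhat x v) ≤ M * u := by
      calc (∫ x in Set.Ioc (0:ℝ) u, fhat x v) ≤ ∫ _ in Set.Ioc (0:ℝ) u, M :=
            setIntegral_mono_on hiv1 (integrableOn_const (by
              rw [Real.volume_Ioc]; exact ENNReal.ofReal_ne_top))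
              measurableSet_Ioc fun x hx => hM x (hsub1 hx)
      _ = M * u := by
            rw [setIntegral_const, Real.volume_real_Ioc_of_le (by linarith), smul_eq_mul]
            ring
    have hfv : (∫ x in Set.Ioc (0:ℝ) 1, fhat x v) = f v := hub v hv
    have hfz : (∫ x in Set.Ioc (0:ℝ) 1, fhat x z) = f z := hub z hzV
    linarith
  have hlb : f v - M * u ≤ C.lb f u v := by
    refine le_csInf ⟨f v, ⟨v, mem_Vstar_self hv, rfl⟩⟩ ?_
    rintro y ⟨z, hz, rfl⟩
    exact key z hz
  rw [div_le_iff₀ hu0]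
  linarith

end CoordScheme
namespace CoordScheme
variable {r : ℕ} {C : CoordScheme r} {f : (Fin r → ℝ) → ℝ} {u x : ℝ} {v z : Fin r → ℝ}

lemma dyadic_mem' {k : ℤ} (hk : k ≤ 0) : (2:ℝ) ^ k ∈ Set.Ioc (0:ℝ) 1 :=
  ⟨dyadic_pos _, zpow_le_one_of_nonpos₀ one_le_two hk⟩

lemma dyadic_mem_Icc {k : ℤ} (hk : k ≤ 0) : (2:ℝ) ^ k ∈ Set.Icc (0:ℝ) 1 :=
  ⟨(dyadic_pos _).le, zpow_le_one_of_nonpos₀ one_le_two hk⟩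

lemma dyadic_eq_pow (n : ℕ) : (2:ℝ) ^ (-(n:ℤ)) = (1/2:ℝ) ^ n := by
  rw [zpow_neg, zpow_natCast, one_div, inv_pow]

lemma Jval_nonneg (hf : ∀ v ∈ C.V, 0 ≤ f v) (hv : v ∈ C.V) (j : ℕ) :
    0 ≤ C.Jval f v j := by
  cases j with
  | zero =>
    rw [Jval_zero]
    have := lb_nonneg (C := C) (f := f) (u := (1:ℝ)) (v := v) hf
    linarith
  | succ k =>
    rw [Jval_succ]
    apply mul_nonneg (by positivity)
    have h := lb_anti (C := C) (f := f) (v := v) hf hv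
      (dyadic_mem_Icc (by omega : -(k:ℤ)-1 ≤ 0)) (dyadic_mem_Icc (by omega : -(k:ℤ) ≤ 0))
      (dyadic_succ_le k)
    linarith

lemma two_pow_mul' (k : ℕ) : (2:ℝ) ^ (k+2) * (2:ℝ) ^ (-(k:ℤ)) = 4 := by
  have h : ((2:ℝ) ^ (k+2) : ℝ) = (2:ℝ) ^ ((k:ℤ)+2) := by
    rw [← zpow_natCast]; push_cast; ring_nf
  rw [h, ← zpow_add₀ (by norm_num : (2:ℝ) ≠ 0)]
  norm_num

lemma Jval_succ_le (hf : ∀ v ∈ C.V, 0 ≤ f v) (hv : v ∈ C.V) {ε M : ℝ}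
    (hM : ∀ u ∈ Set.Ioc (0:ℝ) ε, f v - C.lb f u v ≤ M * u) (k : ℕ)
    (hk : (2:ℝ) ^ (-(k:ℤ)) ≤ ε) :
    C.Jval f v (k+1) ≤ 4 * M := by
  rw [Jval_succ]
  have h1 : C.lb f ((2:ℝ) ^ (-(k:ℤ)-1)) v ≤ f v := lb_le hf hv
  have h2 : f v - C.lb f ((2:ℝ) ^ (-(k:ℤ))) v ≤ M * (2:ℝ) ^ (-(k:ℤ)) :=
    hM _ ⟨dyadic_pos _, hk⟩
  have h3 : (0:ℝ) < (2:ℝ) ^ (k+2) := by positivity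
  calc (2:ℝ) ^ (k+2) * (C.lb f ((2:ℝ) ^ (-(k:ℤ)-1)) v - C.lb f ((2:ℝ) ^ (-(k:ℤ))) v)
      ≤ (2:ℝ) ^ (k+2) * (M * (2:ℝ) ^ (-(k:ℤ))) := by
        apply mul_le_mul_of_nonneg_left _ h3.le
        linarith
  _ = 4 * M := by rw [show (2:ℝ)^(k+2) * (M * (2:ℝ)^(-(k:ℤ))) = ((2:ℝ)^(k+2) * (2:ℝ)^(-(k:ℤ))) * M by ring, two_pow_mul']

lemma dyadic_anti {m n : ℕ} (h : m ≤ n) : (2:ℝ) ^ (-(n:ℤ)) ≤ (2:ℝ) ^ (-(m:ℤ)) :=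
  zpow_le_zpow_right₀ one_le_two (by omega)

lemma Jval_bddAbove (hf : ∀ v ∈ C.V, 0 ≤ f v) (hv : v ∈ C.V) {ε M : ℝ} (hε : 0 < ε)
    (hM : ∀ u ∈ Set.Ioc (0:ℝ) ε, f v - C.lb f u v ≤ M * u) :
    ∃ b : ℝ, ∀ j, C.Jval f v j ≤ b := by
  obtain ⟨N, hN⟩ := exists_pow_lt_of_lt_one hε (by norm_num : (1/2:ℝ) < 1)
  have hNε : (2:ℝ) ^ (-(N:ℤ)) < ε := by rw [dyadic_eq_pow]; exact hN
  refine ⟨((Finset.range (N+1)).sup' (by simp) (C.Jval f v)) ⊔ (4*M), fun j => ?_⟩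
  rcases le_or_gt j N with h | h
  · exact le_trans (Finset.le_sup' (C.Jval f v) (Finset.mem_range.mpr (by omega))) le_sup_left
  · obtain ⟨k, rfl⟩ : ∃ k, j = k + 1 := ⟨j - 1, by omega⟩
    have hk : (2:ℝ) ^ (-(k:ℤ)) ≤ ε :=
      le_of_lt (lt_of_le_of_lt (dyadic_anti (by omega)) hNε)
    exact le_trans (Jval_succ_le hf hv hM k hk) le_sup_right

lemma tendsto_lb (hf : ∀ v ∈ C.V, 0 ≤ f v) (hv : v ∈ C.V) {ε M : ℝ} (hε : 0 < ε)
    (hM : ∀ u ∈ Set.Ioc (0:ℝ) ε, f v - C.lb f u v ≤ M * u) :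
    Tendsto (fun n : ℕ => C.lb f ((2:ℝ) ^ (-(n:ℤ))) v) atTop (𝓝 (f v)) := by
  obtain ⟨N, hN⟩ := exists_pow_lt_of_lt_one hε (by norm_num : (1/2:ℝ) < 1)
  have hNε : (2:ℝ) ^ (-(N:ℤ)) < ε := by rw [dyadic_eq_pow]; exact hN
  apply tendsto_of_tendsto_of_tendsto_of_le_of_le'
    (g := fun n : ℕ => f v - M * (1/2:ℝ)^n) (h := fun _ : ℕ => f v)
  · have h0 : Tendsto (fun n : ℕ => (1/2:ℝ)^n) atTop (𝓝 0) :=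
      tendsto_pow_atTop_nhds_zero_of_lt_one (by norm_num) (by norm_num)
    have := (h0.const_mul M).const_sub (f v)
    simpa using this
  · exact tendsto_const_nhds
  · filter_upwards [Filter.eventually_ge_atTop N] with n hn
    have hk : (2:ℝ) ^ (-(n:ℤ)) ≤ ε := le_of_lt (lt_of_le_of_lt (dyadic_anti hn) hNε)
    have := hM _ ⟨dyadic_pos (-(n:ℤ)), hk⟩
    have h2 : M * (1/2:ℝ)^n = M * (2:ℝ)^(-(n:ℤ)) := by rw [dyadic_eq_pow]
    linarith
  · exact Filter.Eventually.of_forall fun n => lb_le hf hv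

lemma tendsto_Jint (hf : ∀ v ∈ C.V, 0 ≤ f v) (hv : v ∈ C.V) {ε M : ℝ} (hε : 0 < ε)
    (hM : ∀ u ∈ Set.Ioc (0:ℝ) ε, f v - C.lb f u v ≤ M * u) :
    Tendsto (C.Jint f v) atTop (𝓝 (f v)) := by
  rw [← tendsto_add_atTop_iff_nat 1]
  have : (fun n : ℕ => C.Jint f v (n+1)) = fun n : ℕ => C.lb f ((2:ℝ) ^ (-(n:ℤ))) v :=
    funext fun n => Jint_succ C f v n
  rw [this]
  exact tendsto_lb hf hv hε hM

lemma hasSum_Jval (hf : ∀ v ∈ C.V, 0 ≤ f v) (hv : v ∈ C.V) {ε M : ℝ} (hε : 0 < ε)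
    (hM : ∀ u ∈ Set.Ioc (0:ℝ) ε, f v - C.lb f u v ≤ M * u) :
    HasSum (fun j : ℕ => C.Jval f v j * (2:ℝ) ^ (-(j:ℤ)-1)) (f v) := by
  rw [hasSum_iff_tendsto_nat_of_nonneg
    (fun j => mul_nonneg (Jval_nonneg hf hv j) (dyadic_pos _).le)]
  have : (fun n : ℕ => ∑ j ∈ Finset.range n, C.Jval f v j * (2:ℝ) ^ (-(j:ℤ)-1))
      = C.Jint f v := funext fun n => (Jint_eq_sum C f v n).symm
  rw [this]
  exact tendsto_Jint hf hv hε hM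

lemma Jest_measurable : Measurable (fun u => C.Jest f u v) := by
  unfold Jest
  refine Measurable.comp (g := C.Jval f v) measurable_from_top ?_
  apply Nat.measurable_floor.comp
  simp only [Real.logb]
  exact (Real.measurable_log.div_const _).neg

lemma dyadic_sub (j : ℕ) : (2:ℝ) ^ (-(j:ℤ)) - (2:ℝ) ^ (-(j:ℤ)-1) = (2:ℝ) ^ (-(j:ℤ)-1) := by
  have h := zpow_add_one₀ (by norm_num : (2:ℝ) ≠ 0) (-(j:ℤ)-1)
  have h2 : (-(j:ℤ)-1)+1 = -(j:ℤ) := by ring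
  rw [h2] at h
  linarith

lemma dyadic_iUnion :
    (⋃ j : ℕ, Set.Ioc ((2:ℝ) ^ (-(j:ℤ)-1)) ((2:ℝ) ^ (-(j:ℤ)))) = Set.Ioc (0:ℝ) 1 := by
  ext u
  simp only [Set.mem_iUnion]
  constructor
  · rintro ⟨j, hj⟩
    exact ⟨lt_trans (dyadic_pos _) hj.1, le_trans hj.2 (dyadic_le_one j)⟩
  · intro hu
    exact ⟨⌊-Real.logb 2 u⌋₊, mem_dyadic_piece hu⟩

lemma dyadic_pairwise :
    Pairwise (Function.onFun Disjoint fun j : ℕ => Set.Ioc ((2:ℝ) ^ (-(j:ℤ)-1)) ((2:ℝ) ^ (-(j:ℤ)))) := by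
  intro i j hij
  rcases hij.lt_or_gt with h | h
  · exact Set.Ioc_disjoint_Ioc.mpr (le_trans (min_le_right _ _)
      (le_trans (zpow_le_zpow_right₀ one_le_two (by omega : -(j:ℤ) ≤ -(i:ℤ)-1)) (le_max_left _ _)))
  · exact Set.Ioc_disjoint_Ioc.mpr (le_trans (min_le_left _ _)
      (le_trans (zpow_le_zpow_right₀ one_le_two (by omega : -(i:ℤ) ≤ -(j:ℤ)-1)) (le_max_right _ _)))

end CoordScheme
namespace CoordScheme
variable {r : ℕ} {C : CoordScheme r} {f : (Fin r → ℝ) → ℝ} {u x : ℝ} {v z : Fin r → ℝ}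

lemma Jval_consistent (hu : u ∈ Set.Icc (0:ℝ) 1) (hz : z ∈ C.Vstar u v) {j : ℕ}
    (hup : u ≤ (2:ℝ) ^ (-(j:ℤ))) : C.Jval f z j = C.Jval f v j := by
  have key : ∀ m : ℕ, m ≤ j → C.lb f ((2:ℝ)^(-(m:ℤ))) z = C.lb f ((2:ℝ)^(-(m:ℤ))) v :=
    fun m hm => lb_consistent' hu (dyadic_mem_Icc (by omega))
      (le_trans hup (dyadic_anti hm)) hz
  cases j with
  | zero =>
    rw [Jval_zero, Jval_zero]
    have h := key 0 le_rfl
    norm_num at h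
    rw [h]
  | succ k =>
    rw [Jval_succ, Jval_succ]
    have h1 := key (k+1) le_rfl
    have h2 := key k (by omega)
    have hc : (-((k+1:ℕ)):ℤ) = -(k:ℤ)-1 := by push_cast; ring
    rw [hc] at h1
    rw [h1, h2]

lemma Jest_consistent (hu : u ∈ Set.Ioc (0:ℝ) 1) (hz : z ∈ C.Vstar u v) :
    C.Jest f u v = C.Jest f u z := by
  unfold Jest
  exact (Jval_consistent ⟨hu.1.le, hu.2⟩ hz (mem_dyadic_piece hu).2).symm

lemma Jest_integrable (hf : ∀ v ∈ C.V, 0 ≤ f v) (hv : v ∈ C.V) {ε M : ℝ} (hε : 0 < ε)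
    (hM : ∀ u ∈ Set.Ioc (0:ℝ) ε, f v - C.lb f u v ≤ M * u) :
    IntegrableOn (fun u => C.Jest f u v) (Set.Ioc (0:ℝ) 1) := by
  obtain ⟨b, hb⟩ := Jval_bddAbove hf hv hε hM
  apply Measure.integrableOn_of_bounded (M := b)
  · rw [Real.volume_Ioc]; exact ENNReal.ofReal_ne_top
  · exact Jest_measurable.aestronglyMeasurable
  · apply ae_of_all
    intro u
    simp only [Jest]
    rw [Real.norm_eq_abs, abs_of_nonneg (Jval_nonneg hf hv _)]
    exact hb _

lemma Jest_integral (hf : ∀ v ∈ C.V, 0 ≤ f v) (hv : v ∈ C.V) {ε M : ℝ} (hε : 0 < ε)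
    (hM : ∀ u ∈ Set.Ioc (0:ℝ) ε, f v - C.lb f u v ≤ M * u) :
    (∫ u in Set.Ioc (0:ℝ) 1, C.Jest f u v) = f v := by
  have hint := Jest_integrable hf hv hε hM
  rw [← dyadic_iUnion] at hint ⊢
  rw [integral_iUnion (fun j => measurableSet_Ioc) dyadic_pairwise hint]
  have hpiece : ∀ j : ℕ,
      (∫ u in Set.Ioc ((2:ℝ)^(-(j:ℤ)-1)) ((2:ℝ)^(-(j:ℤ))), C.Jest f u v)
        = C.Jval f v j * (2:ℝ)^(-(j:ℤ)-1) := by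
    intro j
    rw [setIntegral_congr_fun (g := fun _ => C.Jval f v j) measurableSet_Ioc
      (fun u hu => by simp only [Jest]; rw [nat_floor_logb_eq hu])]
    rw [setIntegral_const, Real.volume_real_Ioc_of_le (dyadic_succ_le j), smul_eq_mul, dyadic_sub]
    ring
  rw [tsum_congr hpiece]
  exact (hasSum_Jval hf hv hε hM).tsum_eq

end CoordScheme

/-- `f` has a nonnegative unbiased estimator bounded on every data vector
iff for every `v ∈ V`, `limsup_{u→0⁺} (f(v) − f̲⁽ᵛ⁾(u))/u < ∞`, i.e. the quotient is
eventually bounded above as `u → 0⁺`. -/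
theorem stmt8 {r : ℕ} (C : CoordScheme r) (f : (Fin r → ℝ) → ℝ)
    (hf : ∀ v ∈ C.V, 0 ≤ f v) :
    (∃ fhat : ℝ → (Fin r → ℝ) → ℝ,
        C.IsEstimator fhat ∧ C.Nonneg fhat ∧ C.Unbiased f fhat ∧
        ∀ v ∈ C.V, BddAbove ((fun u => fhat u v) '' Set.Ioc (0:ℝ) 1)) ↔
    ∀ v ∈ C.V,
      Filter.IsBoundedUnder (· ≤ ·) (𝓝[>] (0:ℝ))
        (fun u => (f v - C.lb f u v) / u) := by
  constructor
  · rintro ⟨fhat, hest, hnn, hub, hbdd⟩ v hv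
    obtain ⟨M, hM⟩ := hbdd v hv
    refine ⟨M, ?_⟩
    rw [Filter.eventually_map]
    filter_upwards [Ioc_mem_nhdsGT_of_mem
      (⟨le_refl (0:ℝ), one_pos⟩ : (0:ℝ) ∈ Set.Ico (0:ℝ) 1)] with u hu
    exact CoordScheme.forward_bound hf hest hnn hub hv
      (fun x hx => hM ⟨x, hx, rfl⟩) hu
  · intro hB
    have hext : ∀ v ∈ C.V, ∃ ε : ℝ, 0 < ε ∧ ∃ M : ℝ,
        ∀ u ∈ Set.Ioc (0:ℝ) ε, f v - C.lb f u v ≤ M * u := by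
      intro v hv
      obtain ⟨M, hM⟩ := hB v hv
      rw [Filter.eventually_map] at hM
      obtain ⟨ε, hε, hsub⟩ := mem_nhdsGT_iff_exists_Ioc_subset.mp hM
      refine ⟨ε, hε, M, fun u hu => ?_⟩
      have h := hsub hu
      simp only [Set.mem_setOf_eq] at h
      rw [div_le_iff₀ hu.1] at h
      linarith
    refine ⟨C.Jest f, ⟨?_, ?_⟩, ?_, ?_, ?_⟩
    · intro v hv
      obtain ⟨ε, hε, M, hM⟩ := hext v hv
      exact CoordScheme.Jest_integrable hf hv hε hM
    · intro u hu v hv z hz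
      exact CoordScheme.Jest_consistent hu hz
    · intro u hu v hv
      exact CoordScheme.Jval_nonneg hf hv _
    · intro v hv
      obtain ⟨ε, hε, M, hM⟩ := hext v hv
      exact CoordScheme.Jest_integral hf hv hε hM
    · intro v hv
      obtain ⟨ε, hε, M, hM⟩ := hext v hv
      obtain ⟨b, hb⟩ := CoordScheme.Jval_bddAbove hf hv hε hM
      refine ⟨b, ?_⟩
      rintro y ⟨u, hu, rfl⟩
      exact hb _
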